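/- (Periodic excitation sustains riots.) Consider the single-site system with periodic shocks: between shock times the dynamics are λ' = -ωλ + r(α)G(λ), α' = -h(λ)α, and at times t_i = iT (i = 0,1,2,...) the tension jumps: α(t_i⁺) = α(t_i⁻) + A. Assume λ(0) = λ₀ > 0, z₀ r(0) < ω < z₀, G(z)=z(z₀-z), r increasing with limit 1 at +∞, h ≤ θ. Then for every T > 0 and δ > 0 there exists A* = A*(T, δ, λ₀) such that for all A ≥ A*, liminf_{t→∞} λ(t) ≥ λ* - δ, where λ* = z₀ - ω. -/

import Mathlib

set_option maxHeartbeats 1600000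

open Real Filter Set

noncomputable def rfun (β a z : ℝ) : ℝ := 1 / (1 + Real.exp (-β * (z - a)))

noncomputable def hfun (θ p z : ℝ) : ℝ := θ / (1 + z) ^ p

noncomputable def Gfun (z₀ z : ℝ) : ℝ := z * (z₀ - z)

section helpers

lemma mono_exp {f f' : ℝ → ℝ} {a b K : ℝ}
    (hc : ContinuousOn f (Set.Icc a b))
    (hd : ∀ x ∈ Set.Ioo a b, HasDerivAt f (f' x) x)
    (hK : ∀ x ∈ Set.Ioo a b, 0 ≤ f' x + K * f x) :
    MonotoneOn (fun t => f t * Real.exp (K * t)) (Set.Icc a b) := by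
  apply monotoneOn_of_deriv_nonneg (convex_Icc a b)
  · exact hc.mul ((Real.continuous_exp.comp (continuous_const.mul continuous_id)).continuousOn)
  · intro x hx
    rw [interior_Icc] at hx
    exact (((hd x hx).mul (((hasDerivAt_id x).const_mul K).exp))).differentiableAt.differentiableWithinAt
  · intro x hx
    rw [interior_Icc] at hx
    have h1 : HasDerivAt (fun t => Real.exp (K * t)) (Real.exp (K * x) * K) x := by
      simpa using ((hasDerivAt_id x).const_mul K).exp
    have h2 := (hd x hx).mul h1
    rw [show deriv (fun t => f t * Real.exp (K * t)) x = _ from h2.deriv]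
    have h3 := hK x hx
    have hexp := Real.exp_pos (K * x)
    nlinarith

lemma barrier_upper {f f' : ℝ → ℝ} {a b M : ℝ}
    (hc : ContinuousOn f (Set.Icc a b))
    (hd : ∀ x ∈ Set.Ioo a b, HasDerivAt f (f' x) x)
    (hM : ∀ x ∈ Set.Ioo a b, M ≤ f x → f' x < 0)
    (h0 : f a ≤ M) : ∀ t ∈ Set.Icc a b, f t ≤ M := by
  intro t ht
  by_contra hlt
  push_neg at hlt
  have hat : a ≤ t := ht.1
  set S := {s : ℝ | s ∈ Set.Icc a t ∧ f s ≤ M} with hS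
  have hne : S.Nonempty := ⟨a, ⟨le_refl a, hat⟩, h0⟩
  have hbdd : BddAbove S := ⟨t, fun s hs => hs.1.2⟩
  have hclosed : IsClosed S := by
    have : S = Set.Icc a t ∩ f ⁻¹' (Set.Iic M) := by
      ext s; simp [hS, Set.mem_Icc, and_assoc]
    rw [this]
    exact (hc.mono (Set.Icc_subset_Icc_right ht.2)).preimage_isClosed_of_isClosed
      isClosed_Icc isClosed_Iic
  set u := sSup S with hu
  have huS : u ∈ S := hclosed.csSup_mem hne hbdd
  have hut : u < t := lt_of_le_of_ne huS.1.2 (fun h => by rw [h] at huS; linarith [huS.2])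
  have hgt : ∀ s ∈ Set.Ioc u t, M < f s := by
    intro s hs
    by_contra hle
    push_neg at hle
    have : s ∈ S := ⟨⟨le_trans huS.1.1 hs.1.le, hs.2⟩, hle⟩
    exact absurd (le_csSup hbdd this) (not_le.mpr hs.1)
  have hanti : StrictAntiOn f (Set.Icc u t) := by
    apply strictAntiOn_of_deriv_neg (convex_Icc u t)
    · exact hc.mono (Set.Icc_subset_Icc huS.1.1 ht.2)
    · intro x hx
      rw [interior_Icc] at hx
      have hxab : x ∈ Set.Ioo a b := ⟨lt_of_le_of_lt huS.1.1 hx.1, lt_of_lt_of_le hx.2 ht.2⟩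
      rw [(hd x hxab).deriv]
      exact hM x hxab (le_of_lt (hgt x ⟨hx.1, hx.2.le⟩))
  have := hanti (Set.left_mem_Icc.mpr hut.le) (Set.right_mem_Icc.mpr hut.le) hut
  have := huS.2
  linarith

lemma barrier_lower {f f' : ℝ → ℝ} {a b m : ℝ}
    (hc : ContinuousOn f (Set.Icc a b))
    (hd : ∀ x ∈ Set.Ioo a b, HasDerivAt f (f' x) x)
    (hM : ∀ x ∈ Set.Ioo a b, f x ≤ m → 0 < f' x)
    (h0 : m ≤ f a) : ∀ t ∈ Set.Icc a b, m ≤ f t := by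
  intro t ht
  have := barrier_upper (f := fun x => -f x) (f' := fun x => -f' x) (M := -m)
    hc.neg (fun x hx => (hd x hx).neg)
    (fun x hx h => by
      have h' : -m ≤ -f x := h
      have := hM x hx (by linarith)
      show -f' x < 0
      linarith)
    (by simpa using h0) t ht
  simpa using this

lemma exp_lower {f f' : ℝ → ℝ} {a b K : ℝ}
    (hc : ContinuousOn f (Set.Icc a b))
    (hd : ∀ x ∈ Set.Ioo a b, HasDerivAt f (f' x) x)
    (hK : ∀ x ∈ Set.Ioo a b, 0 ≤ f x → 0 ≤ f' x + K * f x)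
    (h0 : 0 < f a) :
    ∀ t ∈ Set.Icc a b, f a * Real.exp (K * a) ≤ f t * Real.exp (K * t) ∧ 0 < f t := by
  have hpos : ∀ t ∈ Set.Icc a b, 0 < f t := by
    intro t ht
    by_contra hle
    push_neg at hle
    set S := {s : ℝ | s ∈ Set.Icc a t ∧ f s ≤ 0} with hS
    have hne : S.Nonempty := ⟨t, ⟨⟨ht.1, le_refl t⟩, hle⟩⟩
    have hbdd : BddBelow S := ⟨a, fun s hs => hs.1.1⟩
    have hclosed : IsClosed S := by
      have : S = Set.Icc a t ∩ f ⁻¹' (Set.Iic 0) := by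
        ext s; simp [hS, Set.mem_Icc, and_assoc]
      rw [this]
      exact (hc.mono (Set.Icc_subset_Icc_right ht.2)).preimage_isClosed_of_isClosed
        isClosed_Icc isClosed_Iic
    set u := sInf S with hu
    have huS : u ∈ S := hclosed.csInf_mem hne hbdd
    have hau : a < u := lt_of_le_of_ne huS.1.1 (fun h => by rw [← h] at huS; linarith [huS.2])
    have hposlt : ∀ s ∈ Set.Ico a u, 0 < f s := by
      intro s hs
      by_contra hle2
      push_neg at hle2
      have : s ∈ S := ⟨⟨hs.1, le_trans hs.2.le huS.1.2⟩, hle2⟩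
      exact absurd (csInf_le hbdd this) (not_le.mpr hs.2)
    have hmono := mono_exp (K := K) (hc.mono (Set.Icc_subset_Icc_right (le_trans huS.1.2 ht.2)))
      (fun x hx => hd x ⟨hx.1, lt_of_lt_of_le hx.2 (le_trans huS.1.2 ht.2)⟩)
      (fun x hx => hK x ⟨hx.1, lt_of_lt_of_le hx.2 (le_trans huS.1.2 ht.2)⟩
        (le_of_lt (hposlt x ⟨hx.1.le, hx.2⟩)))
    have h3 : f a * Real.exp (K * a) ≤ f u * Real.exp (K * u) :=
      hmono (Set.left_mem_Icc.mpr hau.le) (Set.right_mem_Icc.mpr hau.le) hau.le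
    have h1 := Real.exp_pos (K * a)
    have h2 := Real.exp_pos (K * u)
    have h4 : f u * Real.exp (K * u) ≤ 0 :=
      mul_nonpos_iff.mpr (Or.inr ⟨huS.2, h2.le⟩)
    nlinarith [mul_pos h0 h1]
  intro t ht
  refine ⟨?_, hpos t ht⟩
  have hmono := mono_exp (K := K) (hc.mono (Set.Icc_subset_Icc_right ht.2))
    (fun x hx => hd x ⟨hx.1, lt_of_lt_of_le hx.2 ht.2⟩)
    (fun x hx => hK x ⟨hx.1, lt_of_lt_of_le hx.2 ht.2⟩
      (le_of_lt (hpos x ⟨hx.1.le, le_trans hx.2.le ht.2⟩)))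
  exact hmono (Set.left_mem_Icc.mpr ht.1) (Set.right_mem_Icc.mpr ht.1) ht.1

lemma one_add_exp_pos (x : ℝ) : 0 < 1 + Real.exp x := by positivity

lemma rfun_pos (β a x : ℝ) : 0 < rfun β a x :=
  div_pos one_pos (one_add_exp_pos _)

lemma rfun_le_one (β a x : ℝ) : rfun β a x ≤ 1 := by
  unfold rfun
  rw [div_le_one (one_add_exp_pos _)]
  linarith [Real.exp_pos (-β * (x - a))]

lemma rfun_ge {β a x η : ℝ} (hβ : 0 < β) (hη : 0 < η) (hη1 : η < 1)
    (hx : a + Real.log ((1 - η) / η) / β ≤ x) : 1 - η ≤ rfun β a x := by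
  have h1η : 0 < 1 - η := by linarith
  have hquot : 0 < η / (1 - η) := div_pos hη h1η
  have h1 : Real.exp (-β * (x - a)) ≤ η / (1 - η) := by
    rw [← Real.exp_log hquot]
    apply Real.exp_le_exp.mpr
    have hlog : Real.log (η / (1 - η)) = -Real.log ((1 - η) / η) := by
      rw [← Real.log_inv]
      congr 1
      rw [inv_div]
    rw [hlog]
    have hx2 : Real.log ((1 - η) / η) ≤ β * (x - a) := by
      have := (div_le_iff₀ hβ).mp (by linarith : Real.log ((1 - η) / η) / β ≤ x - a)
      linarith
    linarith
  unfold rfun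
  rw [le_div_iff₀ (one_add_exp_pos _)]
  have : (1 - η) * (η / (1 - η)) = η := by field_simp
  nlinarith

lemma hfun_le {θ p z : ℝ} (hθ : 0 ≤ θ) (hp : 0 ≤ p) (hz : 0 ≤ z) : hfun θ p z ≤ θ := by
  unfold hfun
  have h1 : (1:ℝ) ≤ (1 + z) ^ p := by
    have h := Real.rpow_le_rpow (by norm_num : (0:ℝ) ≤ 1) (by linarith : (1:ℝ) ≤ 1 + z) hp
    rwa [Real.one_rpow] at h
  have h2 : (0:ℝ) < (1 + z) ^ p := lt_of_lt_of_le one_pos h1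
  rw [div_le_iff₀ h2]
  nlinarith [mul_le_mul_of_nonneg_left h1 hθ]

end helpers

/-- periodic excitation sustains riots.  For the impulsive system with
shocks of amplitude `A` at times `t_i = iT`, for every `T > 0` and `δ > 0` there is
`A* = A*(T,δ,lam₀)` such that for all `A ≥ A*`,
`liminf_{t→∞} λ(t) ≥ λ* - δ` where `λ* = z₀ - ω`. -/
theorem riot_periodic_excitation
    (ω z₀ β a θ p lam₀ : ℝ)
    (hω : 0 < ω) (hz₀ : 0 < z₀) (hβ : 0 < β) (ha : 0 < a)
    (hθ : 0 < θ) (hp : 0 < p) (hp1 : p ≤ 1)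
    (hlow : z₀ * rfun β a 0 < ω) (hhigh : ω < z₀)
    (hlam₀ : 0 < lam₀) :
    ∀ T > (0:ℝ), ∀ δ > (0:ℝ), ∃ Astar > (0:ℝ), ∀ A ≥ Astar,
      ∀ lam alp : ℝ → ℝ,
        lam 0 = lam₀ → alp 0 = A →
        ContinuousOn lam (Set.Ici 0) →
        -- between the shock times the riot dynamics hold
        (∀ i : ℕ, ∀ t ∈ Set.Ioo ((i : ℝ) * T) (((i : ℝ) + 1) * T),
          HasDerivAt lam (-ω * lam t + rfun β a (alp t) * Gfun z₀ (lam t)) t ∧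
          HasDerivAt alp (-(hfun θ p (lam t)) * alp t) t) →
        -- at each shock time the tension is right-continuous and jumps up by `A`
        (∀ i : ℕ, ContinuousWithinAt alp (Set.Ici ((i : ℝ) * T)) ((i : ℝ) * T)) →
        (∀ i : ℕ, 1 ≤ i →
          Tendsto alp (nhdsWithin ((i : ℝ) * T) (Set.Iio ((i : ℝ) * T)))
            (nhds (alp ((i : ℝ) * T) - A))) →
        (z₀ - ω) - δ ≤ Filter.liminf lam Filter.atTop := by
  intro T hT δ hδ
  have hzω : 0 < z₀ - ω := by linarith
  obtain ⟨δ', hδ'def⟩ : ∃ x : ℝ, x = min δ ((z₀ - ω)/2) := ⟨_, rfl⟩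
  have hδ'pos : 0 < δ' := by rw [hδ'def]; exact lt_min hδ (by linarith)
  have hδ'le : δ' ≤ δ := by rw [hδ'def]; exact min_le_left _ _
  have hδ'le2 : δ' ≤ (z₀ - ω)/2 := by rw [hδ'def]; exact min_le_right _ _
  have hωδ : 0 < ω + δ' := by linarith
  obtain ⟨η, hηdef⟩ : ∃ x : ℝ, x = δ' / (2*(ω+δ')) := ⟨_, rfl⟩
  have hηpos : 0 < η := by rw [hηdef]; exact div_pos hδ'pos (by linarith)
  have hηlt : η < 1 := by rw [hηdef, div_lt_one (by linarith)]; linarith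
  have hηkey : η * (ω + δ') = δ'/2 := by
    rw [hηdef]; field_simp
  obtain ⟨c, hcdef⟩ : ∃ x : ℝ, x = z₀ - ω - δ' := ⟨_, rfl⟩
  have hcpos : 0 < c := by rw [hcdef]; linarith
  obtain ⟨M', hM'def⟩ : ∃ x : ℝ, x = max lam₀ z₀ := ⟨_, rfl⟩
  have hM'z : z₀ ≤ M' := by rw [hM'def]; exact le_max_right _ _
  have hM'lam : lam₀ ≤ M' := by rw [hM'def]; exact le_max_left _ _
  have hM'pos : 0 < M' := lt_of_lt_of_le hz₀ hM'z
  obtain ⟨x₀, hx₀def⟩ : ∃ x : ℝ, x = a + Real.log ((1-η)/η) / β := ⟨_, rfl⟩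
  obtain ⟨Astar, hAstardef⟩ : ∃ x : ℝ, x = max 1 ((max x₀ 0 + 1) * Real.exp (θ*T)) := ⟨_, rfl⟩
  have hAstarpos : 0 < Astar := by
    rw [hAstardef]; exact lt_of_lt_of_le one_pos (le_max_left _ _)
  refine ⟨Astar, hAstarpos, ?_⟩
  intro A hA lam alp hlam0 halp0 hlamc hode hrc hjump
  have hApos : 0 < A := lt_of_lt_of_le hAstarpos hA
  have hAexp : x₀ ≤ A * Real.exp (-(θ*T)) := by
    have h1 : (max x₀ 0 + 1) * Real.exp (θ*T) ≤ A :=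
      le_trans (hAstardef ▸ le_max_right 1 ((max x₀ 0 + 1) * Real.exp (θ*T))) hA
    have h2 := Real.exp_pos (θ*T)
    have h3 : max x₀ 0 + 1 ≤ A / Real.exp (θ*T) := (le_div_iff₀ h2).mpr h1
    have h4 : A / Real.exp (θ*T) = A * Real.exp (-(θ*T)) := by
      rw [Real.exp_neg]; ring
    have h5 : x₀ ≤ max x₀ 0 + 1 := by have := le_max_left x₀ 0; linarith
    linarith
  -- the main per-interval step
  have step : ∀ i : ℕ, (0 < lam ((i:ℝ)*T) ∧ lam ((i:ℝ)*T) ≤ M' ∧ A ≤ alp ((i:ℝ)*T)) →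
      ((∀ t ∈ Set.Icc ((i:ℝ)*T) (((i:ℝ)+1)*T), 0 < lam t ∧ lam t ≤ M') ∧
       (∀ t ∈ Set.Ico ((i:ℝ)*T) (((i:ℝ)+1)*T), A * Real.exp (-(θ*(t - (i:ℝ)*T))) ≤ alp t) ∧
       (0 < lam (((i:ℝ)+1)*T) ∧ lam (((i:ℝ)+1)*T) ≤ M' ∧ A ≤ alp (((i:ℝ)+1)*T))) := by
    intro i hi
    obtain ⟨hl1, hl2, ha1⟩ := hi
    have hab : (i:ℝ)*T < ((i:ℝ)+1)*T := by nlinarith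
    have ha0 : 0 ≤ (i:ℝ)*T := mul_nonneg (Nat.cast_nonneg i) hT.le
    have hsub : Set.Icc ((i:ℝ)*T) (((i:ℝ)+1)*T) ⊆ Set.Ici (0:ℝ) := fun x hx => le_trans ha0 hx.1
    have hcl : ContinuousOn lam (Set.Icc ((i:ℝ)*T) (((i:ℝ)+1)*T)) := hlamc.mono hsub
    have hdl : ∀ x ∈ Set.Ioo ((i:ℝ)*T) (((i:ℝ)+1)*T),
        HasDerivAt lam (-ω * lam x + rfun β a (alp x) * Gfun z₀ (lam x)) x :=
      fun x hx => (hode i x hx).1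
    have hda : ∀ x ∈ Set.Ioo ((i:ℝ)*T) (((i:ℝ)+1)*T),
        HasDerivAt alp (-(hfun θ p (lam x)) * alp x) x :=
      fun x hx => (hode i x hx).2
    have hupper : ∀ t ∈ Set.Icc ((i:ℝ)*T) (((i:ℝ)+1)*T), lam t ≤ M' := by
      apply barrier_upper hcl hdl _ hl2
      intro x hx hMx
      have hr1 := rfun_pos β a (alp x)
      have hr2 := rfun_le_one β a (alp x)
      have hlx : 0 < lam x := lt_of_lt_of_le hM'pos hMx
      have hG : rfun β a (alp x) * (lam x * (z₀ - lam x)) ≤ 0 :=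
        mul_nonpos_iff.mpr (Or.inl ⟨hr1.le, mul_nonpos_iff.mpr (Or.inl ⟨hlx.le, by linarith⟩)⟩)
      show -ω * lam x + rfun β a (alp x) * Gfun z₀ (lam x) < 0
      simp only [Gfun]
      nlinarith [mul_pos hω hlx]
    have hlow2 : ∀ t ∈ Set.Icc ((i:ℝ)*T) (((i:ℝ)+1)*T), 0 < lam t := by
      intro t ht
      refine (exp_lower (K := ω + M') hcl hdl ?_ hl1 t ht).2
      intro x hx hx0
      have hxM := hupper x ⟨hx.1.le, hx.2.le⟩
      have hr1 := rfun_pos β a (alp x)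
      have hr2 := rfun_le_one β a (alp x)
      show 0 ≤ -ω * lam x + rfun β a (alp x) * Gfun z₀ (lam x) + (ω + M') * lam x
      simp only [Gfun]
      rcases le_or_gt (lam x) z₀ with hcase | hcase
      · have h1 : 0 ≤ rfun β a (alp x) * (lam x * (z₀ - lam x)) :=
          mul_nonneg hr1.le (mul_nonneg hx0 (by linarith))
        nlinarith
      · have h1 : lam x * (z₀ - lam x) ≤ lam x * (rfun β a (alp x) * (z₀ - lam x)) := by
          nlinarith [mul_nonneg (mul_nonneg hx0 (by linarith : (0:ℝ) ≤ 1 - rfun β a (alp x)))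
            (by linarith : (0:ℝ) ≤ lam x - z₀)]
        nlinarith [mul_le_mul_of_nonneg_left hxM hx0, mul_nonneg hx0 hz₀.le]
    have hbnd : ∀ t ∈ Set.Icc ((i:ℝ)*T) (((i:ℝ)+1)*T), 0 < lam t ∧ lam t ≤ M' :=
      fun t ht => ⟨hlow2 t ht, hupper t ht⟩
    -- right-continuity at the left endpoint gives positivity nearby
    have halpa : 0 < alp ((i:ℝ)*T) := lt_of_lt_of_le hApos ha1
    have hevent : ∀ᶠ s in nhdsWithin ((i:ℝ)*T) (Set.Ici ((i:ℝ)*T)), 0 < alp s :=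
      Filter.Tendsto.eventually (hrc i) (eventually_gt_nhds halpa)
    obtain ⟨ε, hε, hball⟩ := Metric.mem_nhdsWithin_iff.mp hevent
    have hpos_near : ∀ s ∈ Set.Ico ((i:ℝ)*T) ((i:ℝ)*T + ε), 0 < alp s := by
      intro s hs
      apply hball
      constructor
      · rw [Metric.mem_ball, Real.dist_eq, abs_lt]
        constructor <;> [linarith [hs.1]; linarith [hs.2]]
      · exact hs.1
    have halpbnd : ∀ t ∈ Set.Ico ((i:ℝ)*T) (((i:ℝ)+1)*T),
        A * Real.exp (-(θ * (t - (i:ℝ)*T))) ≤ alp t := by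
      intro t ht
      rcases eq_or_lt_of_le ht.1 with heq | hlt
      · rw [← heq]
        simpa using ha1
      · have hkey : ∀ s ∈ Set.Ioo ((i:ℝ)*T) (min ((i:ℝ)*T + ε) t),
            alp s * Real.exp (θ * s) ≤ alp t * Real.exp (θ * t) := by
          intro s hs
          have hst : s < t := lt_of_lt_of_le hs.2 (min_le_right _ _)
          have hsa : (i:ℝ)*T < s := hs.1
          have hsub2 : Set.Icc s t ⊆ Set.Ioo ((i:ℝ)*T) (((i:ℝ)+1)*T) :=
            fun x hx => ⟨lt_of_lt_of_le hsa hx.1, lt_of_le_of_lt hx.2 ht.2⟩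
          have hca : ContinuousOn alp (Set.Icc s t) :=
            fun x hx => ((hda x (hsub2 hx)).continuousAt).continuousWithinAt
          have hres := exp_lower (K := θ) hca
            (fun x hx => hda x (hsub2 ⟨hx.1.le, hx.2.le⟩))
            (fun x hx hx0 => by
              have hlamx : 0 < lam x := (hbnd x ⟨le_trans hsa.le hx.1.le, le_trans hx.2.le ht.2.le⟩).1
              have hh := hfun_le hθ.le hp.le hlamx.le
              have := mul_nonneg hx0 (by linarith : (0:ℝ) ≤ θ - hfun θ p (lam x))
              nlinarith)
            (hpos_near s ⟨hsa.le, lt_of_lt_of_le hs.2 (min_le_left _ _)⟩)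
            t (Set.right_mem_Icc.mpr hst.le)
          exact hres.1
        have htend : Tendsto (fun s => alp s * Real.exp (θ * s))
            (nhdsWithin ((i:ℝ)*T) (Set.Ioi ((i:ℝ)*T)))
            (nhds (alp ((i:ℝ)*T) * Real.exp (θ * ((i:ℝ)*T)))) := by
          apply Filter.Tendsto.mul
          · exact Filter.Tendsto.mono_left (hrc i) (nhdsWithin_mono _ Set.Ioi_subset_Ici_self)
          · exact ((Real.continuous_exp.comp (continuous_const.mul continuous_id)).tendsto
              ((i:ℝ)*T)).mono_left nhdsWithin_le_nhds
        have hmem : Set.Ioo ((i:ℝ)*T) (min ((i:ℝ)*T + ε) t) ∈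
            nhdsWithin ((i:ℝ)*T) (Set.Ioi ((i:ℝ)*T)) :=
          Ioo_mem_nhdsGT_of_mem ⟨le_refl _, lt_min (by linarith) hlt⟩
        have hfinal : alp ((i:ℝ)*T) * Real.exp (θ * ((i:ℝ)*T)) ≤ alp t * Real.exp (θ * t) :=
          le_of_tendsto htend (eventually_of_mem hmem (fun s hs => hkey s hs))
        have h2 := Real.exp_pos (θ * t)
        have h3 : A * Real.exp (θ * ((i:ℝ)*T)) ≤ alp t * Real.exp (θ * t) := by
          have := Real.exp_pos (θ * ((i:ℝ)*T))
          nlinarith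
        have h4 : A * Real.exp (θ * ((i:ℝ)*T)) / Real.exp (θ * t) ≤ alp t :=
          (div_le_iff₀ h2).mpr h3
        calc A * Real.exp (-(θ * (t - (i:ℝ)*T)))
            = A * Real.exp (θ * ((i:ℝ)*T)) / Real.exp (θ * t) := by
              rw [show -(θ*(t - (i:ℝ)*T)) = θ * ((i:ℝ)*T) - θ * t by ring, Real.exp_sub]
              ring
          _ ≤ alp t := h4
    have hend := hbnd (((i:ℝ)+1)*T) (Set.right_mem_Icc.mpr hab.le)
    have hjb : A ≤ alp (((i:ℝ)+1)*T) := by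
      have hb'eq : ((i+1 : ℕ):ℝ) * T = ((i:ℝ)+1)*T := by push_cast; ring
      have hj := hjump (i+1) (by omega)
      rw [hb'eq] at hj
      have hmem : Set.Ioo ((i:ℝ)*T) (((i:ℝ)+1)*T) ∈
          nhdsWithin (((i:ℝ)+1)*T) (Set.Iio (((i:ℝ)+1)*T)) :=
        Ioo_mem_nhdsLT_of_mem ⟨hab, le_refl _⟩
      have hev : ∀ᶠ s in nhdsWithin (((i:ℝ)+1)*T) (Set.Iio (((i:ℝ)+1)*T)), 0 ≤ alp s :=
        eventually_of_mem hmem (fun s hs =>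
          le_trans (mul_nonneg hApos.le (Real.exp_pos _).le) (halpbnd s ⟨hs.1.le, hs.2⟩))
      have := ge_of_tendsto hj hev
      linarith
    exact ⟨hbnd, halpbnd, hend.1, hend.2, hjb⟩
  -- induction along shocks
  have key : ∀ i : ℕ, 0 < lam ((i:ℝ)*T) ∧ lam ((i:ℝ)*T) ≤ M' ∧ A ≤ alp ((i:ℝ)*T) := by
    intro i
    induction i with
    | zero =>
      simp only [Nat.cast_zero, zero_mul]
      exact ⟨by rw [hlam0]; exact hlam₀, by rw [hlam0]; exact hM'lam, le_of_eq halp0.symm⟩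
    | succ n ih =>
      have h := (step n ih).2.2
      have hcast : ((n+1 : ℕ):ℝ) * T = ((n:ℝ)+1)*T := by push_cast; ring
      rw [hcast]
      exact h
  -- global bounds
  have hfloor : ∀ t : ℝ, 0 ≤ t →
      ((⌊t/T⌋₊ : ℝ) * T ≤ t ∧ t ≤ ((⌊t/T⌋₊:ℝ)+1) * T) := by
    intro t htt
    have h1 : (⌊t/T⌋₊ : ℝ) ≤ t/T := Nat.floor_le (div_nonneg htt hT.le)
    have h2 : t/T < (⌊t/T⌋₊ : ℝ) + 1 := Nat.lt_floor_add_one _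
    exact ⟨(le_div_iff₀ hT).mp h1, le_of_lt ((div_lt_iff₀ hT).mp h2)⟩
  have gbnd : ∀ t : ℝ, 0 ≤ t → (0 < lam t ∧ lam t ≤ M') := by
    intro t htt
    obtain ⟨h1, h2⟩ := hfloor t htt
    exact (step _ (key ⌊t/T⌋₊)).1 t ⟨h1, h2⟩
  -- lower bound on r along trajectories
  have hrlow : ∀ (i:ℕ), ∀ x ∈ Set.Ioo ((i:ℝ)*T) (((i:ℝ)+1)*T), 1 - η ≤ rfun β a (alp x) := by
    intro i x hx
    have halpb := (step i (key i)).2.1 x ⟨hx.1.le, hx.2⟩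
    have h1 : A * Real.exp (-(θ*T)) ≤ A * Real.exp (-(θ * (x - (i:ℝ)*T))) := by
      apply mul_le_mul_of_nonneg_left _ hApos.le
      apply Real.exp_le_exp.mpr
      have hxT : x - (i:ℝ)*T ≤ T := by nlinarith [hx.2]
      nlinarith [hθ.le]
    apply rfun_ge hβ hηpos hηlt
    rw [← hx₀def]
    exact le_trans hAexp (le_trans h1 halpb)
  -- growth estimate below c
  have hFlow : ∀ (i:ℕ), ∀ x ∈ Set.Ioo ((i:ℝ)*T) (((i:ℝ)+1)*T), lam x ≤ c →
      (δ'/2) * lam x ≤ -ω * lam x + rfun β a (alp x) * Gfun z₀ (lam x) := by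
    intro i x hx hxc
    have hr := hrlow i x hx
    have hx0 : 0 ≤ x := le_trans (mul_nonneg (Nat.cast_nonneg i) hT.le) hx.1.le
    have hlx : 0 < lam x := (gbnd x hx0).1
    have h4 : (ω + δ') * lam x ≤ lam x * (z₀ - lam x) := by
      have : ω + δ' ≤ z₀ - lam x := by rw [hcdef] at hxc; linarith
      nlinarith
    have h5 : (1-η) * ((ω + δ') * lam x) ≤ rfun β a (alp x) * (lam x * (z₀ - lam x)) :=
      mul_le_mul hr h4 (mul_nonneg hωδ.le hlx.le) (rfun_pos β a (alp x)).le
    have h6 : -ω * lam x + (1-η) * ((ω + δ') * lam x) = (δ'/2) * lam x := by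
      linear_combination (-(lam x)) * hηkey
    simp only [Gfun]
    linarith
  -- the barrier keeps lam above c once reached
  have hbar : ∀ i : ℕ, c ≤ lam ((i:ℝ)*T) →
      ∀ t ∈ Set.Icc ((i:ℝ)*T) (((i:ℝ)+1)*T), c ≤ lam t := by
    intro i hci
    have ha0 : 0 ≤ (i:ℝ)*T := mul_nonneg (Nat.cast_nonneg i) hT.le
    apply barrier_lower (f' := fun x => -ω * lam x + rfun β a (alp x) * Gfun z₀ (lam x))
      (hlamc.mono (fun x hx => le_trans ha0 hx.1)) (fun x hx => (hode i x hx).1) _ hci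
    intro x hx hxc
    have hx0 : 0 ≤ x := le_trans ha0 hx.1.le
    have hlx := (gbnd x hx0).1
    have h1 := hFlow i x hx hxc
    have h2 : 0 < (δ'/2) * lam x := mul_pos (by linarith) hlx
    show 0 < -ω * lam x + rfun β a (alp x) * Gfun z₀ (lam x)
    linarith
  -- lam reaches c at some shock time
  have hreach : ∃ i : ℕ, c ≤ lam ((i:ℝ)*T) := by
    by_contra hall
    push_neg at hall
    have hallc : ∀ (i:ℕ), ∀ t ∈ Set.Icc ((i:ℝ)*T) (((i:ℝ)+1)*T), lam t < c := by
      intro i t ht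
      by_contra hge
      push_neg at hge
      have ha0 : 0 ≤ (i:ℝ)*T := mul_nonneg (Nat.cast_nonneg i) hT.le
      have hb := barrier_lower (a := t) (b := ((i:ℝ)+1)*T)
        (f' := fun x => -ω * lam x + rfun β a (alp x) * Gfun z₀ (lam x))
        (hlamc.mono (fun x hx => le_trans (le_trans ha0 ht.1) hx.1))
        (fun x hx => (hode i x ⟨lt_of_le_of_lt ht.1 hx.1, hx.2⟩).1)
        (fun x hx hxc => by
          have hx' : x ∈ Set.Ioo ((i:ℝ)*T) (((i:ℝ)+1)*T) := ⟨lt_of_le_of_lt ht.1 hx.1, hx.2⟩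
          have hx0 : 0 ≤ x := le_trans ha0 hx'.1.le
          have hlx := (gbnd x hx0).1
          have h1 := hFlow i x hx' hxc
          have h2 : 0 < (δ'/2) * lam x := mul_pos (by linarith) hlx
          show 0 < -ω * lam x + rfun β a (alp x) * Gfun z₀ (lam x)
          linarith)
        hge (((i:ℝ)+1)*T) (Set.right_mem_Icc.mpr ht.2)
      have hcast : ((i+1 : ℕ):ℝ) * T = ((i:ℝ)+1)*T := by push_cast; ring
      have := hall (i+1)
      rw [hcast] at this
      linarith
    have hgrow : ∀ i : ℕ, lam₀ ≤ lam ((i:ℝ)*T) * Real.exp (-(δ'/2) * ((i:ℝ)*T)) := by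
      intro i
      induction i with
      | zero => simp [hlam0]
      | succ n ih =>
        have hab : (n:ℝ)*T ≤ ((n:ℝ)+1)*T := by nlinarith [(Nat.cast_nonneg n : (0:ℝ) ≤ (n:ℝ))]
        have ha0 : 0 ≤ (n:ℝ)*T := mul_nonneg (Nat.cast_nonneg n) hT.le
        have hmono := mono_exp (K := -(δ'/2)) (f := lam)
          (f' := fun x => -ω * lam x + rfun β a (alp x) * Gfun z₀ (lam x))
          (hlamc.mono (fun x hx => le_trans ha0 hx.1))
          (fun x hx => (hode n x hx).1)
          (fun x hx => by
            have hxc : lam x ≤ c := (hallc n x ⟨hx.1.le, hx.2.le⟩).le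
            have h1 := hFlow n x hx hxc
            show 0 ≤ -ω * lam x + rfun β a (alp x) * Gfun z₀ (lam x) + -(δ'/2) * lam x
            simp only [Gfun] at h1 ⊢
            linarith)
        have h := hmono (Set.left_mem_Icc.mpr hab) (Set.right_mem_Icc.mpr hab) hab
        have hcast : ((n+1 : ℕ):ℝ) * T = ((n:ℝ)+1)*T := by push_cast; ring
        rw [hcast]
        simp only at h
        exact le_trans ih h
    obtain ⟨n, hn⟩ := exists_nat_gt ((c - lam₀) / (lam₀ * ((δ'/2) * T)))
    have hm := hgrow n
    have hcn := hall n
    have hexp : (δ'/2) * ((n:ℝ)*T) + 1 ≤ Real.exp ((δ'/2) * ((n:ℝ)*T)) :=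
      Real.add_one_le_exp _
    have h1 : lam₀ * Real.exp ((δ'/2) * ((n:ℝ)*T)) ≤ lam ((n:ℝ)*T) := by
      have h3 : Real.exp (-(δ'/2)*((n:ℝ)*T)) * Real.exp ((δ'/2)*((n:ℝ)*T)) = 1 := by
        rw [← Real.exp_add, show -(δ'/2)*((n:ℝ)*T) + (δ'/2)*((n:ℝ)*T) = 0 by ring,
          Real.exp_zero]
      calc lam₀ * Real.exp ((δ'/2) * ((n:ℝ)*T))
          ≤ (lam ((n:ℝ)*T) * Real.exp (-(δ'/2)*((n:ℝ)*T))) * Real.exp ((δ'/2) * ((n:ℝ)*T)) :=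
            mul_le_mul_of_nonneg_right hm (Real.exp_pos _).le
        _ = lam ((n:ℝ)*T) * (Real.exp (-(δ'/2)*((n:ℝ)*T)) * Real.exp ((δ'/2)*((n:ℝ)*T))) := by
            ring
        _ = lam ((n:ℝ)*T) := by rw [h3, mul_one]
    have h5 : (c - lam₀) < lam₀ * ((δ'/2)*T) * n := by
      have hpos : 0 < lam₀ * ((δ'/2) * T) := by positivity
      rw [div_lt_iff₀ hpos] at hn
      linarith
    have h6 : c < lam₀ * Real.exp ((δ'/2) * ((n:ℝ)*T)) := by
      have h7 : lam₀ * ((δ'/2) * ((n:ℝ)*T) + 1) ≤ lam₀ * Real.exp ((δ'/2) * ((n:ℝ)*T)) :=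
        mul_le_mul_of_nonneg_left hexp hlam₀.le
      nlinarith [h5, h7]
    linarith
  obtain ⟨i₀, hi₀⟩ := hreach
  -- lam stays above c forever after
  have hstay : ∀ i : ℕ, i₀ ≤ i →
      (c ≤ lam ((i:ℝ)*T) ∧ ∀ t ∈ Set.Icc ((i:ℝ)*T) (((i:ℝ)+1)*T), c ≤ lam t) := by
    intro i hi
    induction i, hi using Nat.le_induction with
    | base => exact ⟨hi₀, hbar i₀ hi₀⟩
    | succ n hn ih =>
      have hab : (n:ℝ)*T ≤ ((n:ℝ)+1)*T := by nlinarith [(Nat.cast_nonneg n : (0:ℝ) ≤ (n:ℝ))]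
      have hcast : ((n+1 : ℕ):ℝ) = (n:ℝ)+1 := by push_cast; ring
      have h1 : c ≤ lam (((n+1:ℕ):ℝ)*T) := by
        rw [hcast]
        exact ih.2 _ (Set.right_mem_Icc.mpr hab)
      exact ⟨h1, hbar (n+1) h1⟩
  -- conclusion via liminf
  have hev : ∀ᶠ t in atTop, c ≤ lam t := by
    rw [eventually_atTop]
    refine ⟨max ((i₀:ℝ)*T) 0, fun t htt => ?_⟩
    have ht0 : 0 ≤ t := le_trans (le_max_right _ _) htt
    have hti : (i₀:ℝ)*T ≤ t := le_trans (le_max_left _ _) htt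
    have hfl := hfloor t ht0
    have hii : i₀ ≤ ⌊t/T⌋₊ := Nat.le_floor ((le_div_iff₀ hT).mpr hti)
    exact (hstay ⌊t/T⌋₊ hii).2 t ⟨hfl.1, hfl.2⟩
  have hbdd : Filter.IsBoundedUnder (· ≤ ·) Filter.atTop lam :=
    ⟨M', eventually_map.mpr (eventually_atTop.mpr ⟨0, fun t htt => (gbnd t htt).2⟩)⟩
  have hlim : c ≤ Filter.liminf lam Filter.atTop :=
    Filter.le_liminf_of_le hbdd.isCoboundedUnder_ge hev
  rw [hcdef] at hlim
  linarith
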